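/- Descent-lemma bound for the UAdam step: let f : ℝ^d → ℝ be differentiable with L-Lipschitz gradient, λ̃ ∈ [0,1], and let η_t ∈ ℝ^d be a coordinatewise positive vector, g, m ∈ ℝ^d, and x_{+} = x - η_t ⊙ (m - λ̃(m - g)) (⊙ denotes coordinatewise product). Then f(x_{+}) ≤ f(x) + (λ̃/2)‖√η_t ⊙ (g - ∇f(x))‖² + ((1-λ̃)/2)‖√η_t ⊙ (m - ∇f(x))‖² - (1/2)‖√η_t ⊙ ∇f(x)‖² - (λ̃/2)‖√η_t ⊙ g‖² + (λ̃ L/2)‖η_t ⊙ g‖² - ((1-λ̃)/2)‖√η_t ⊙ m‖² + ((1-λ̃) L/2)‖η_t ⊙ m‖². -/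

import Mathlib

noncomputable section

open scoped RealInnerProductSpace

lemma descent_aux {E : Type*} [NormedAddCommGroup E] [InnerProductSpace ℝ E] [CompleteSpace E]
    (f : E → ℝ) (L : ℝ) (hf : Differentiable ℝ f)
    (hL : ∀ x y, ‖gradient f x - gradient f y‖ ≤ L * ‖x - y‖) (x y : E) :
    f y ≤ f x + ⟪gradient f x, y - x⟫ + L / 2 * ‖y - x‖ ^ 2 := by
  set v := y - x with hv
  have hcont : Continuous fun z => gradient f z := by
    have : LipschitzWith ‖L‖₊ (gradient f) := by
      apply LipschitzWith.of_dist_le_mul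
      intro a b
      rw [dist_eq_norm, dist_eq_norm, coe_nnnorm]
      calc ‖gradient f a - gradient f b‖ ≤ L * ‖a - b‖ := hL a b
        _ ≤ ‖L‖ * ‖a - b‖ :=
          mul_le_mul_of_nonneg_right (le_abs_self L) (norm_nonneg _)
    exact this.continuous
  have hderiv : ∀ t : ℝ,
      HasDerivAt (fun t : ℝ => f (x + t • v)) ⟪gradient f (x + t • v), v⟫ t := by
    intro t
    have h1 : HasDerivAt (fun t : ℝ => x + t • v) v t := by
      simpa using ((hasDerivAt_id t).smul_const v).const_add x
    have h2 := ((hf (x + t • v)).hasGradientAt.hasFDerivAt).comp_hasDerivAt t h1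
    simpa [InnerProductSpace.toDual_apply_apply, Function.comp_def] using h2
  have hint : IntervalIntegrable (fun t : ℝ => ⟪gradient f (x + t • v), v⟫)
      MeasureTheory.volume 0 1 := by
    apply Continuous.intervalIntegrable
    exact (hcont.comp (continuous_const.add (continuous_id.smul continuous_const))).inner
      continuous_const
  have heq : f y - f x = ∫ t in (0:ℝ)..1, ⟪gradient f (x + t • v), v⟫ := by
    have h := intervalIntegral.integral_eq_sub_of_hasDerivAt
      (f := fun t : ℝ => f (x + t • v)) (a := 0) (b := 1) (fun t _ => hderiv t) hint
    rw [h]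
    simp [hv]
  have hint2 : IntervalIntegrable (fun t : ℝ => ⟪gradient f x, v⟫ + L * ‖v‖ ^ 2 * t)
      MeasureTheory.volume 0 1 :=
    (continuous_const.add (continuous_const.mul continuous_id)).intervalIntegrable _ _
  have hbound : (∫ t in (0:ℝ)..1, ⟪gradient f (x + t • v), v⟫)
      ≤ ∫ t in (0:ℝ)..1, (⟪gradient f x, v⟫ + L * ‖v‖ ^ 2 * t) := by
    apply intervalIntegral.integral_mono_on zero_le_one hint hint2
    intro t ht
    obtain ⟨ht0, ht1⟩ := ht
    have h1 : ⟪gradient f (x + t • v), v⟫ - ⟪gradient f x, v⟫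
        = ⟪gradient f (x + t • v) - gradient f x, v⟫ := (inner_sub_left _ _ _).symm
    have h2 : ⟪gradient f (x + t • v) - gradient f x, v⟫
        ≤ ‖gradient f (x + t • v) - gradient f x‖ * ‖v‖ := real_inner_le_norm _ _
    have h3 : ‖gradient f (x + t • v) - gradient f x‖ ≤ L * ‖t • v‖ := by
      simpa using hL (x + t • v) x
    have h4 : ‖t • v‖ = t * ‖v‖ := by
      rw [norm_smul, Real.norm_eq_abs, abs_of_nonneg ht0]
    have h5 : ‖gradient f (x + t • v) - gradient f x‖ * ‖v‖ ≤ (L * (t * ‖v‖)) * ‖v‖ :=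
      mul_le_mul_of_nonneg_right (h4 ▸ h3) (norm_nonneg _)
    nlinarith [h1, h2, h5]
  have hval : (∫ t in (0:ℝ)..1, (⟪gradient f x, v⟫ + L * ‖v‖ ^ 2 * t))
      = ⟪gradient f x, v⟫ + L / 2 * ‖v‖ ^ 2 := by
    rw [intervalIntegral.integral_add (g := fun t : ℝ => L * ‖v‖ ^ 2 * t) (intervalIntegrable_const)
      ((continuous_const.mul continuous_id').intervalIntegrable _ _),
      intervalIntegral.integral_const_mul, integral_id]
    simp
    ring
  linarith [heq, hbound, hval.le, hval.ge]



open scoped RealInnerProductSpace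

lemma coord_ineq (L lam e a b c : ℝ) (hL0 : 0 ≤ L) (hlam0 : 0 ≤ lam) (hlam1 : lam ≤ 1)
    (he : 0 ≤ e) :
    c * (-(e * (b - lam * (b - a)))) + L / 2 * (-(e * (b - lam * (b - a)))) ^ 2
      ≤ lam / 2 * (Real.sqrt e * (a - c)) ^ 2 + (1 - lam) / 2 * (Real.sqrt e * (b - c)) ^ 2
        - 1 / 2 * (Real.sqrt e * c) ^ 2 - lam / 2 * (Real.sqrt e * a) ^ 2
        + lam * L / 2 * (e * a) ^ 2 - (1 - lam) / 2 * (Real.sqrt e * b) ^ 2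
        + (1 - lam) * L / 2 * (e * b) ^ 2 := by
  have hs : Real.sqrt e ^ 2 = e := Real.sq_sqrt he
  have h1 : (Real.sqrt e * (a - c)) ^ 2 = e * (a - c) ^ 2 := by rw [mul_pow, hs]
  have h2 : (Real.sqrt e * (b - c)) ^ 2 = e * (b - c) ^ 2 := by rw [mul_pow, hs]
  have h3 : (Real.sqrt e * c) ^ 2 = e * c ^ 2 := by rw [mul_pow, hs]
  have h4 : (Real.sqrt e * a) ^ 2 = e * a ^ 2 := by rw [mul_pow, hs]
  have h5 : (Real.sqrt e * b) ^ 2 = e * b ^ 2 := by rw [mul_pow, hs]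
  rw [h1, h2, h3, h4, h5]
  nlinarith [mul_nonneg (mul_nonneg (mul_nonneg hL0 hlam0) (sub_nonneg.2 hlam1))
    (sq_nonneg (e * (a - b)))]


/-- Coordinatewise (Hadamard) product on `EuclideanSpace ℝ (Fin d)`. -/
def had {d : ℕ} (η : Fin d → ℝ) (v : EuclideanSpace ℝ (Fin d)) :
    EuclideanSpace ℝ (Fin d) := WithLp.toLp 2 (fun i => η i * v i)

theorem uadam_descent_lemma (d : ℕ) (f : EuclideanSpace ℝ (Fin d) → ℝ) (L : ℝ)
    (hf : Differentiable ℝ f)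
    (hL : ∀ x y : EuclideanSpace ℝ (Fin d), ‖gradient f x - gradient f y‖ ≤ L * ‖x - y‖)
    (lam : ℝ) (hlam0 : 0 ≤ lam) (hlam1 : lam ≤ 1)
    (ηt : Fin d → ℝ) (hη : ∀ i, 0 < ηt i)
    (g m x xp : EuclideanSpace ℝ (Fin d))
    (hxp : xp = x - had ηt (m - lam • (m - g))) :
    f xp ≤ f x
        + lam / 2 * ‖had (fun i => Real.sqrt (ηt i)) (g - gradient f x)‖ ^ 2
        + (1 - lam) / 2 * ‖had (fun i => Real.sqrt (ηt i)) (m - gradient f x)‖ ^ 2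
        - 1 / 2 * ‖had (fun i => Real.sqrt (ηt i)) (gradient f x)‖ ^ 2
        - lam / 2 * ‖had (fun i => Real.sqrt (ηt i)) g‖ ^ 2
        + lam * L / 2 * ‖had ηt g‖ ^ 2
        - (1 - lam) / 2 * ‖had (fun i => Real.sqrt (ηt i)) m‖ ^ 2
        + (1 - lam) * L / 2 * ‖had ηt m‖ ^ 2 := by

  rcases Nat.eq_zero_or_pos d with hd | hd
  · subst hd
    have hz : ∀ v : EuclideanSpace ℝ (Fin 0), v = 0 := fun v => Subsingleton.elim v 0
    rw [hz (had _ _), hz (had _ _), hz (had _ _), hz (had _ _), hz (had _ _), hz (had _ _),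
      hz (had _ _), show xp = x from Subsingleton.elim xp x]
    simp
  · -- 0 ≤ L
    have hL0 : 0 ≤ L := by
      have h := hL 0 (EuclideanSpace.single ⟨0, hd⟩ 1)
      have hn : ‖(0 : EuclideanSpace ℝ (Fin d)) - EuclideanSpace.single ⟨0, hd⟩ (1:ℝ)‖ = 1 := by
        rw [zero_sub, norm_neg, EuclideanSpace.norm_single, norm_one]
      rw [hn, mul_one] at h
      exact le_trans (norm_nonneg _) h
    set G := gradient f x with hG
    have hdes := descent_aux f L hf hL x xp
    -- express as sums
    have hnorm : ∀ v : EuclideanSpace ℝ (Fin d), ‖v‖ ^ 2 = ∑ i, v i ^ 2 := by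
      intro v
      rw [← real_inner_self_eq_norm_sq]
      simp only [PiLp.inner_apply, RCLike.inner_apply, conj_trivial, sq]
    have hip : ⟪G, xp - x⟫ = ∑ i, G i * (xp i - x i) := by
      simp [PiLp.inner_apply, RCLike.inner_apply]
      exact Finset.sum_congr rfl (fun i _ => mul_comm _ _)
    have hcoord : ∀ i, xp i - x i = -(ηt i * (m i - lam * (m i - g i))) := by
      intro i
      rw [hxp]
      simp [had]
    have main : ∑ i, (G i * (xp i - x i) + L / 2 * (xp i - x i) ^ 2)
        ≤ ∑ i, (lam / 2 * (Real.sqrt (ηt i) * (g i - G i)) ^ 2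
            + (1 - lam) / 2 * (Real.sqrt (ηt i) * (m i - G i)) ^ 2
            - 1 / 2 * (Real.sqrt (ηt i) * G i) ^ 2
            - lam / 2 * (Real.sqrt (ηt i) * g i) ^ 2
            + lam * L / 2 * (ηt i * g i) ^ 2
            - (1 - lam) / 2 * (Real.sqrt (ηt i) * m i) ^ 2
            + (1 - lam) * L / 2 * (ηt i * m i) ^ 2) := by
      apply Finset.sum_le_sum
      intro i _
      rw [hcoord i]
      exact coord_ineq L lam (ηt i) (g i) (m i) (G i) hL0 hlam0 hlam1 (hη i).le
    have e1 : ∑ i, (G i * (xp i - x i) + L / 2 * (xp i - x i) ^ 2)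
        = ⟪G, xp - x⟫ + L / 2 * ‖xp - x‖ ^ 2 := by
      rw [hip, hnorm, Finset.sum_add_distrib, Finset.mul_sum]
      rfl
    have e2 : ∑ i, (lam / 2 * (Real.sqrt (ηt i) * (g i - G i)) ^ 2
            + (1 - lam) / 2 * (Real.sqrt (ηt i) * (m i - G i)) ^ 2
            - 1 / 2 * (Real.sqrt (ηt i) * G i) ^ 2
            - lam / 2 * (Real.sqrt (ηt i) * g i) ^ 2
            + lam * L / 2 * (ηt i * g i) ^ 2
            - (1 - lam) / 2 * (Real.sqrt (ηt i) * m i) ^ 2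
            + (1 - lam) * L / 2 * (ηt i * m i) ^ 2)
        = lam / 2 * ‖had (fun i => Real.sqrt (ηt i)) (g - G)‖ ^ 2
        + (1 - lam) / 2 * ‖had (fun i => Real.sqrt (ηt i)) (m - G)‖ ^ 2
        - 1 / 2 * ‖had (fun i => Real.sqrt (ηt i)) G‖ ^ 2
        - lam / 2 * ‖had (fun i => Real.sqrt (ηt i)) g‖ ^ 2
        + lam * L / 2 * ‖had ηt g‖ ^ 2
        - (1 - lam) / 2 * ‖had (fun i => Real.sqrt (ηt i)) m‖ ^ 2
        + (1 - lam) * L / 2 * ‖had ηt m‖ ^ 2 := by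
      simp only [hnorm, had, Finset.mul_sum, PiLp.sub_apply]
      rw [← Finset.sum_add_distrib, ← Finset.sum_sub_distrib, ← Finset.sum_sub_distrib,
        ← Finset.sum_add_distrib, ← Finset.sum_sub_distrib, ← Finset.sum_add_distrib]
    linarith [main, e1.symm.le, e2.le, hdes]

end
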